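/- Let F be a field and I = X·(X^4, X^3Y, XY^3, Y^4) = (X^5, X^4Y, X^2Y^3, XY^4) in F[X,Y]. Then X^3Y^2·I ⊆ I^2 and X^3Y^2 ∉ I; hence X^3Y^2 ∈ ~I \ I and I is not Ratliff-Rush closed. -/

import Mathlib

/-- The Ratliff-Rush closure of the power `I^n`:  `⋃_{k≥0} (I^{n+k} : I^k)`. -/
noncomputable def rrPow {R : Type*} [CommRing R] (I : Ideal R) (n : ℕ) : Ideal R :=
  ⨆ k : ℕ, (I ^ (n + k)).colon ((I ^ k : Ideal R) : Set R)

/-- For `I = X·(X^4, X^3Y, XY^3, Y^4) = (X^5, X^4Y, X^2Y^3, XY^4)` in `F[X,Y]`: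
`X^3Y^2·I ⊆ I^2` and `X^3Y^2 ∉ I`; hence `X^3Y^2 ∈ ~I \ I` and `I` is not
Ratliff-Rush closed. -/
theorem stmt_14 (F : Type*) [Field F]
    (X Y : MvPolynomial (Fin 2) F)
    (hX : X = MvPolynomial.X 0) (hY : Y = MvPolynomial.X 1)
    (I : Ideal (MvPolynomial (Fin 2) F))
    (hI : I = Ideal.span {X ^ 5, X ^ 4 * Y, X ^ 2 * Y ^ 3, X * Y ^ 4}) :
    (∀ f ∈ I, X ^ 3 * Y ^ 2 * f ∈ I ^ 2) ∧
    X ^ 3 * Y ^ 2 ∉ I ∧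
    X ^ 3 * Y ^ 2 ∈ rrPow I 1 ∧
    rrPow I 1 ≠ I := by
  have hg1 : X ^ 5 ∈ I := hI ▸ Ideal.subset_span (by simp)
  have hg2 : X ^ 4 * Y ∈ I := hI ▸ Ideal.subset_span (by simp)
  have hg3 : X ^ 2 * Y ^ 3 ∈ I := hI ▸ Ideal.subset_span (by simp)
  have hg4 : X * Y ^ 4 ∈ I := hI ▸ Ideal.subset_span (by simp)
  have hsq : I ^ 2 = I * I := by ring
  have key : ∀ f ∈ I, X ^ 3 * Y ^ 2 * f ∈ I ^ 2 := by
    intro f hf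
    rw [hI] at hf
    rw [hsq]
    induction hf using Submodule.span_induction with
    | mem x hx =>
      rcases hx with h | h | h | h <;> subst h
      · have e : X ^ 3 * Y ^ 2 * X ^ 5 = (X ^ 4 * Y) * (X ^ 4 * Y) := by ring
        rw [e]; exact Ideal.mul_mem_mul hg2 hg2
      · have e : X ^ 3 * Y ^ 2 * (X ^ 4 * Y) = X ^ 5 * (X ^ 2 * Y ^ 3) := by ring
        rw [e]; exact Ideal.mul_mem_mul hg1 hg3
      · have e : X ^ 3 * Y ^ 2 * (X ^ 2 * Y ^ 3) = (X ^ 4 * Y) * (X * Y ^ 4) := by ring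
        rw [e]; exact Ideal.mul_mem_mul hg2 hg4
      · have e : X ^ 3 * Y ^ 2 * (X * Y ^ 4) = (X ^ 2 * Y ^ 3) * (X ^ 2 * Y ^ 3) := by ring
        rw [e]; exact Ideal.mul_mem_mul hg3 hg3
    | zero => simp
    | add x y _ _ hx hy => rw [mul_add]; exact add_mem hx hy
    | smul a x _ hx =>
      rw [smul_eq_mul, show X ^ 3 * Y ^ 2 * (a * x) = a * (X ^ 3 * Y ^ 2 * x) by ring]
      exact Ideal.mul_mem_left _ _ hx
  have notmem : X ^ 3 * Y ^ 2 ∉ I := by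
    classical
    subst hX hY hI
    intro h
    have m1 : (MvPolynomial.X (0 : Fin 2) ^ 5 : MvPolynomial (Fin 2) F) =
        MvPolynomial.monomial (Finsupp.single 0 5) 1 := MvPolynomial.X_pow_eq_monomial
    have m2 : (MvPolynomial.X (0 : Fin 2) ^ 4 * MvPolynomial.X 1 : MvPolynomial (Fin 2) F) =
        MvPolynomial.monomial (Finsupp.single 0 4 + Finsupp.single 1 1) 1 := by
      rw [← pow_one (MvPolynomial.X 1), MvPolynomial.X_pow_eq_monomial,
        MvPolynomial.X_pow_eq_monomial, MvPolynomial.monomial_mul, one_mul]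
    have m3 : (MvPolynomial.X (0 : Fin 2) ^ 2 * MvPolynomial.X 1 ^ 3 : MvPolynomial (Fin 2) F) =
        MvPolynomial.monomial (Finsupp.single 0 2 + Finsupp.single 1 3) 1 := by
      rw [MvPolynomial.X_pow_eq_monomial, MvPolynomial.X_pow_eq_monomial,
        MvPolynomial.monomial_mul, one_mul]
    have m4 : (MvPolynomial.X (0 : Fin 2) * MvPolynomial.X 1 ^ 4 : MvPolynomial (Fin 2) F) =
        MvPolynomial.monomial (Finsupp.single 0 1 + Finsupp.single 1 4) 1 := by
      rw [← pow_one (MvPolynomial.X 0), MvPolynomial.X_pow_eq_monomial,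
        MvPolynomial.X_pow_eq_monomial, MvPolynomial.monomial_mul, one_mul]
    rw [show ({MvPolynomial.X (0 : Fin 2) ^ 5, MvPolynomial.X 0 ^ 4 * MvPolynomial.X 1,
        MvPolynomial.X 0 ^ 2 * MvPolynomial.X 1 ^ 3,
        MvPolynomial.X 0 * MvPolynomial.X 1 ^ 4} : Set (MvPolynomial (Fin 2) F)) =
        (fun i => MvPolynomial.monomial i (1 : F)) ''
        {Finsupp.single 0 5, Finsupp.single 0 4 + Finsupp.single 1 1,
         Finsupp.single 0 2 + Finsupp.single 1 3,
         Finsupp.single 0 1 + Finsupp.single 1 4} by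
      rw [Set.image_insert_eq, Set.image_insert_eq, Set.image_insert_eq,
        Set.image_singleton, m1, m2, m3, m4]] at h
    rw [MvPolynomial.mem_ideal_span_monomial_image] at h
    have hsup : (MvPolynomial.X (0 : Fin 2) ^ 3 * MvPolynomial.X 1 ^ 2 :
        MvPolynomial (Fin 2) F).support =
        {Finsupp.single 0 3 + Finsupp.single 1 2} := by
      rw [MvPolynomial.X_pow_eq_monomial, MvPolynomial.X_pow_eq_monomial,
        MvPolynomial.monomial_mul, one_mul, MvPolynomial.support_monomial,
        if_neg (one_ne_zero)]
    obtain ⟨si, hsi, hle⟩ := h _ (by rw [hsup]; exact Finset.mem_singleton_self _)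
    rcases hsi with h' | h' | h' | h' <;> subst h'
    · have := hle 0; simp [Finsupp.single_apply] at this
    · have := hle 0; simp [Finsupp.single_apply] at this
    · have := hle 1; simp [Finsupp.single_apply] at this
    · have := hle 1; simp [Finsupp.single_apply] at this
  have hrr : X ^ 3 * Y ^ 2 ∈ rrPow I 1 := by
    refine Submodule.mem_iSup_of_mem (ι := ℕ) (p := fun k => (I ^ (1 + k)).colon ((I ^ k : Ideal (MvPolynomial (Fin 2) F)) : Set (MvPolynomial (Fin 2) F))) 1 ?_
    show X ^ 3 * Y ^ 2 ∈ (I ^ (1 + 1)).colon ((I ^ 1 : Ideal (MvPolynomial (Fin 2) F)) : Set (MvPolynomial (Fin 2) F))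
    rw [Submodule.mem_colon]
    intro p hp
    rw [SetLike.mem_coe, pow_one] at hp
    rw [smul_eq_mul, show (1:ℕ)+1 = 2 from rfl]
    exact key p hp
  exact ⟨key, notmem, hrr, fun h => notmem (h ▸ hrr)⟩
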